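/- Let n ≥ 2 be an integer with k = ω(n). If there exists a prime q dividing n whose multiplicity a in the prime factorization of n satisfies a ≥ 1 + M(k)/log q, then σ(n)/n < e^γ · log(log n), regardless of the multiplicities of the other prime divisors of n. -/

import Mathlib

open Real Finset

/-- `Nk k` is the `k`-th primorial: the product of the first `k` primes
(`Nat.nth Nat.Prime i` is the `(i+1)`-st prime, so `Nat.nth Nat.Prime 0 = 2`). -/
noncomputable def Nk (k : ℕ) : ℕ := ∏ i ∈ Finset.range k, Nat.nth Nat.Prime i

/-- `M k = exp (e^(-γ) * N_k / φ(N_k)) - log N_k`. -/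
noncomputable def M (k : ℕ) : ℝ :=
  Real.exp (Real.exp (-Real.eulerMascheroniConstant) * (Nk k : ℝ) / (Nat.totient (Nk k) : ℝ))
    - Real.log (Nk k)

lemma nth_prime_le_orderEmbOfFin (s : Finset ℕ) (hs : ∀ p ∈ s, p.Prime)
    {k : ℕ} (h : s.card = k) (i : Fin k) :
    Nat.nth Nat.Prime i ≤ s.orderEmbOfFin h i := by
  set f := s.orderEmbOfFin h with hf
  have hfs : ∀ j, (f j).Prime := fun j => hs _ (s.orderEmbOfFin_mem h j)
  have hcount : (i : ℕ) ≤ Nat.count Nat.Prime (f i) := by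
    rw [Nat.count_eq_card_filter_range]
    have hsub : Finset.image (fun j : Fin k => f j) (Finset.Iio i)
        ⊆ (Finset.range (f i)).filter Nat.Prime := by
      intro x hx
      simp only [mem_image, mem_Iio] at hx
      obtain ⟨j, hj, rfl⟩ := hx
      exact mem_filter.mpr ⟨mem_range.mpr (f.strictMono hj), hfs j⟩
    calc (i : ℕ) = (Finset.Iio i).card := (Fin.card_Iio i).symm
      _ = (Finset.image (fun j : Fin k => f j) (Finset.Iio i)).card :=
          (Finset.card_image_of_injective _ f.injective).symm
      _ ≤ _ := Finset.card_le_card hsub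
  calc Nat.nth Nat.Prime i ≤ Nat.nth Nat.Prime (Nat.count Nat.Prime (f i)) :=
        (Nat.nth_le_nth Nat.infinite_setOf_prime).mpr hcount
    _ = f i := Nat.nth_count (hfs i)

lemma prod_eq_prod_orderEmbOfFin {β : Type*} [CommMonoid β] (s : Finset ℕ) {k : ℕ}
    (h : s.card = k) (g : ℕ → β) :
    ∏ p ∈ s, g p = ∏ i : Fin k, g (s.orderEmbOfFin h i) := by
  have himg : Finset.image (fun i : Fin k => s.orderEmbOfFin h i) Finset.univ = s := by
    apply Finset.coe_injective
    rw [Finset.coe_image, Finset.coe_univ, Set.image_univ, Finset.range_orderEmbOfFin]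
  have := Finset.prod_image (f := g) (s := (Finset.univ : Finset (Fin k)))
    (g := fun i => s.orderEmbOfFin h i)
    (fun a _ b _ hab => (s.orderEmbOfFin h).injective hab)
  rw [himg] at this
  simpa using this

lemma Nk_le_prod (s : Finset ℕ) (hs : ∀ p ∈ s, p.Prime) :
    ∏ i ∈ Finset.range s.card, Nat.nth Nat.Prime i ≤ ∏ p ∈ s, p := by
  rw [prod_eq_prod_orderEmbOfFin s rfl (fun p => p), ← Fin.prod_univ_eq_prod_range]
  exact Finset.prod_le_prod' fun i _ => nth_prime_le_orderEmbOfFin s hs rfl i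

lemma ratio_anti {a b : ℝ} (ha : 2 ≤ a) (hab : a ≤ b) : b / (b - 1) ≤ a / (a - 1) := by
  have h1 : (0:ℝ) < a - 1 := by linarith
  have h2 : (0:ℝ) < b - 1 := by linarith
  rw [div_le_div_iff₀ h2 h1]
  nlinarith

lemma ratio_prod_le (s : Finset ℕ) (hs : ∀ p ∈ s, p.Prime) :
    ∏ p ∈ s, ((p : ℝ) / ((p : ℝ) - 1)) ≤
      ∏ i ∈ Finset.range s.card, ((Nat.nth Nat.Prime i : ℝ) / ((Nat.nth Nat.Prime i : ℝ) - 1)) := by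
  rw [prod_eq_prod_orderEmbOfFin s rfl, ← Fin.prod_univ_eq_prod_range]
  apply Finset.prod_le_prod
  · intro i _
    have h2 : 2 ≤ s.orderEmbOfFin rfl i := (hs _ (s.orderEmbOfFin_mem rfl i)).two_le
    have h2' : (2:ℝ) ≤ (s.orderEmbOfFin rfl i : ℝ) := by exact_mod_cast h2
    exact div_nonneg (by linarith) (by linarith)
  · intro i _
    apply ratio_anti
    · exact_mod_cast (Nat.prime_nth_prime i).two_le
    · exact_mod_cast nth_prime_le_orderEmbOfFin s hs rfl i

lemma sigma_pp_lt {p : ℕ} (hp : p.Prime) {a : ℕ} :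
    (ArithmeticFunction.sigma 1 (p ^ a) : ℝ) / (p : ℝ) ^ a < (p : ℝ) / ((p : ℝ) - 1) := by
  have hp1 : (1:ℝ) < (p:ℝ) := by exact_mod_cast hp.one_lt
  have hcast : (ArithmeticFunction.sigma 1 (p ^ a) : ℝ) = ∑ i ∈ Finset.range (a+1), (p:ℝ)^i := by
    rw [ArithmeticFunction.sigma_one_apply_prime_pow hp]
    push_cast
    rfl
  have hgeom : ∑ i ∈ Finset.range (a+1), (p:ℝ)^i = ((p:ℝ)^(a+1) - 1)/((p:ℝ)-1) :=
    geom_sum_eq (ne_of_gt hp1) (a+1)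
  rw [hcast, hgeom]
  have hpa : 0 < (p:ℝ)^a := pow_pos (by linarith) a
  rw [div_div, div_lt_div_iff₀ (mul_pos (by linarith) hpa) (by linarith)]
  have hps : (p:ℝ)^(a+1) = (p:ℝ)^a * (p:ℝ) := pow_succ _ _
  nlinarith

lemma sigma_div_lt (n : ℕ) (hn : 2 ≤ n) :
    (ArithmeticFunction.sigma 1 n : ℝ) / (n : ℝ) <
      ∏ p ∈ n.primeFactors, ((p : ℝ) / ((p : ℝ) - 1)) := by
  have hn0 : n ≠ 0 := by omega
  have hσ := ArithmeticFunction.isMultiplicative_sigma.multiplicative_factorization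
    (ArithmeticFunction.sigma 1) hn0
  have hσR : (ArithmeticFunction.sigma 1 n : ℝ) =
      ∏ p ∈ n.primeFactors, (ArithmeticFunction.sigma 1 (p ^ n.factorization p) : ℝ) := by
    rw [hσ, Finsupp.prod, Nat.support_factorization]
    push_cast
    rfl
  have hnR : (n : ℝ) = ∏ p ∈ n.primeFactors, ((p:ℝ) ^ n.factorization p) := by
    conv_lhs => rw [← Nat.factorization_prod_pow_eq_self hn0]
    rw [Finsupp.prod, Nat.support_factorization]
    push_cast
    rfl
  rw [hσR, hnR, ← Finset.prod_div_distrib]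
  apply Finset.prod_lt_prod_of_nonempty
  · intro p hp
    have hp' := Nat.prime_of_mem_primeFactors hp
    have hppos : (0:ℝ) < (p:ℝ) ^ n.factorization p := by
      have : (0:ℝ) < (p:ℝ) := by exact_mod_cast hp'.pos
      positivity
    apply div_pos _ hppos
    have : 0 < ArithmeticFunction.sigma 1 (p ^ n.factorization p) := by
      rw [ArithmeticFunction.sigma_one_apply_prime_pow hp']
      exact Finset.sum_pos (fun i _ => pow_pos hp'.pos i)
        ⟨0, Finset.mem_range.mpr (Nat.succ_pos _)⟩
    exact_mod_cast this
  · intro p hp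
    exact sigma_pp_lt (Nat.prime_of_mem_primeFactors hp)
  · exact Nat.nonempty_primeFactors.mpr (by omega)

lemma Nk_pos (k : ℕ) : 0 < Nk k :=
  Finset.prod_pos fun i _ => (Nat.prime_nth_prime i).pos

lemma Nk_ratio (k : ℕ) :
    (Nk k : ℝ) / (Nat.totient (Nk k) : ℝ) =
      ∏ i ∈ Finset.range k, ((Nat.nth Nat.Prime i : ℝ) / ((Nat.nth Nat.Prime i : ℝ) - 1)) := by
  classical
  set P := (Finset.range k).image (Nat.nth Nat.Prime) with hP
  have hinj : ∀ a ∈ Finset.range k, ∀ b ∈ Finset.range k,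
      Nat.nth Nat.Prime a = Nat.nth Nat.Prime b → a = b :=
    fun a _ b _ hab => (Nat.nth_injective Nat.infinite_setOf_prime) hab
  have h1 : ∏ p ∈ P, p = ∏ i ∈ Finset.range k, Nat.nth Nat.Prime i := Finset.prod_image hinj
  have h2 : ∏ p ∈ P, (p - 1) = ∏ i ∈ Finset.range k, (Nat.nth Nat.Prime i - 1) :=
    Finset.prod_image hinj
  have hNk : Nk k = ∏ p ∈ P, p := by rw [h1]; rfl
  have hPF : (Nk k).primeFactors = P := by
    rw [hNk]
    exact Nat.primeFactors_prod (fun p hp => by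
      obtain ⟨i, _, rfl⟩ := Finset.mem_image.mp hp
      exact Nat.prime_nth_prime i)
  have key := Nat.totient_mul_prod_primeFactors (Nk k)
  rw [hPF, h1, h2] at key
  have hcastsub : ((∏ i ∈ Finset.range k, (Nat.nth Nat.Prime i - 1) : ℕ) : ℝ)
      = ∏ i ∈ Finset.range k, ((Nat.nth Nat.Prime i : ℝ) - 1) := by
    rw [Nat.cast_prod]
    refine Finset.prod_congr rfl fun i _ => ?_
    rw [Nat.cast_sub (Nat.prime_nth_prime i).one_lt.le, Nat.cast_one]
  have keyR : (Nat.totient (Nk k) : ℝ) * ∏ i ∈ Finset.range k, (Nat.nth Nat.Prime i : ℝ)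
      = (Nk k : ℝ) * ∏ i ∈ Finset.range k, ((Nat.nth Nat.Prime i : ℝ) - 1) := by
    rw [← hcastsub]
    exact_mod_cast congrArg (Nat.cast : ℕ → ℝ) key
  have hφpos : (0:ℝ) < (Nat.totient (Nk k) : ℝ) := by
    exact_mod_cast Nat.totient_pos.mpr (Nk_pos k)
  have hBpos : (0:ℝ) < ∏ i ∈ Finset.range k, ((Nat.nth Nat.Prime i : ℝ) - 1) := by
    apply Finset.prod_pos
    intro i _
    have : (2:ℝ) ≤ (Nat.nth Nat.Prime i : ℝ) := by exact_mod_cast (Nat.prime_nth_prime i).two_le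
    linarith
  rw [Finset.prod_div_distrib, div_eq_div_iff hφpos.ne' hBpos.ne']
  linear_combination -keyR

lemma lower_bound (n : ℕ) (hn0 : n ≠ 0) (q : ℕ) (hq : q.Prime) (hqn : q ∣ n) :
    q ^ (n.factorization q - 1) * Nk n.primeFactors.card ≤ n := by
  have hqS : q ∈ n.primeFactors := Nat.mem_primeFactors.mpr ⟨hq, hqn, hn0⟩
  have ha1 : 1 ≤ n.factorization q := hq.factorization_pos_of_dvd hn0 hqn
  have h1 : Nk n.primeFactors.card ≤ ∏ p ∈ n.primeFactors, p :=
    Nk_le_prod _ (fun p hp => Nat.prime_of_mem_primeFactors hp)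
  have h2 : ∏ p ∈ n.primeFactors, p ^ n.factorization p = n := by
    conv_rhs => rw [← Nat.factorization_prod_pow_eq_self hn0]
    rw [Finsupp.prod, Nat.support_factorization]
  calc q ^ (n.factorization q - 1) * Nk n.primeFactors.card
      ≤ q ^ (n.factorization q - 1) * ∏ p ∈ n.primeFactors, p := Nat.mul_le_mul_left _ h1
    _ = q ^ (n.factorization q - 1) * (q * ∏ p ∈ n.primeFactors.erase q, p) := by
        rw [← Finset.mul_prod_erase _ _ hqS]
    _ = q ^ n.factorization q * ∏ p ∈ n.primeFactors.erase q, p := by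
        rw [← mul_assoc, ← pow_succ]
        congr 2
        omega
    _ ≤ q ^ n.factorization q * ∏ p ∈ n.primeFactors.erase q, p ^ n.factorization p := by
        apply Nat.mul_le_mul_left
        apply Finset.prod_le_prod'
        intro p hp
        have hp' := Finset.mem_of_mem_erase hp
        exact Nat.le_self_pow
          (Nat.Prime.factorization_pos_of_dvd (Nat.prime_of_mem_primeFactors hp') hn0
            (Nat.dvd_of_mem_primeFactors hp')).ne' p
    _ = ∏ p ∈ n.primeFactors, p ^ n.factorization p := by
        rw [Finset.mul_prod_erase _ (fun p => p ^ n.factorization p) hqS]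
    _ = n := h2

theorem robin_of_large_multiplicity (n : ℕ) (hn : 2 ≤ n)
    (q : ℕ) (hq : q.Prime) (hqn : q ∣ n)
    (ha : (1 : ℝ) + M n.primeFactors.card / Real.log q ≤ (n.factorization q : ℝ)) :
    (ArithmeticFunction.sigma 1 n : ℝ) / n <
      Real.exp Real.eulerMascheroniConstant * Real.log (Real.log n) := by
  have hn0 : n ≠ 0 := by omega
  set k := n.primeFactors.card with hk
  set a := n.factorization q with haa
  have ha1 : 1 ≤ a := hq.factorization_pos_of_dvd hn0 hqn
  have hlogq : 0 < Real.log q := Real.log_pos (by exact_mod_cast hq.one_lt)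
  set T : ℝ := (Nk k : ℝ) / (Nat.totient (Nk k) : ℝ) with hT
  have hstep1 : (ArithmeticFunction.sigma 1 n : ℝ) / n < T := by
    calc (ArithmeticFunction.sigma 1 n : ℝ) / n
        < ∏ p ∈ n.primeFactors, ((p : ℝ) / ((p : ℝ) - 1)) := sigma_div_lt n hn
      _ ≤ ∏ i ∈ Finset.range k, ((Nat.nth Nat.Prime i : ℝ) / ((Nat.nth Nat.Prime i : ℝ) - 1)) :=
          ratio_prod_le _ (fun p hp => Nat.prime_of_mem_primeFactors hp)
      _ = T := (Nk_ratio k).symm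
  set c : ℝ := Real.exp (-Real.eulerMascheroniConstant) * (Nk k : ℝ) / (Nat.totient (Nk k) : ℝ)
    with hc
  have hM : M k = Real.exp c - Real.log (Nk k) := rfl
  have hNkpos : (0:ℝ) < (Nk k : ℝ) := by exact_mod_cast Nk_pos k
  have hqpos : (0:ℝ) < (q:ℝ) := by exact_mod_cast hq.pos
  have hqpow : (0:ℝ) < (q:ℝ) ^ (a - 1) := pow_pos hqpos _
  have hlb : (q:ℝ) ^ (a - 1) * (Nk k : ℝ) ≤ (n : ℝ) := by
    exact_mod_cast lower_bound n hn0 q hq hqn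
  have hlog : Real.exp c ≤ Real.log n := by
    have h1 : Real.log ((q:ℝ) ^ (a - 1) * (Nk k : ℝ)) ≤ Real.log n :=
      Real.log_le_log (by positivity) hlb
    rw [Real.log_mul (ne_of_gt hqpow) (ne_of_gt hNkpos), Real.log_pow] at h1
    have hcast : ((a - 1 : ℕ) : ℝ) = (a : ℝ) - 1 := by
      rw [Nat.cast_sub ha1, Nat.cast_one]
    have hMle : M k ≤ ((a - 1 : ℕ) : ℝ) * Real.log q := by
      rw [hcast]
      have hdiv : M k / Real.log q ≤ (a : ℝ) - 1 := by linarith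
      calc M k = M k / Real.log q * Real.log q := by field_simp
        _ ≤ ((a : ℝ) - 1) * Real.log q := by
            exact mul_le_mul_of_nonneg_right hdiv hlogq.le
    have : Real.exp c = M k + Real.log (Nk k) := by rw [hM]; ring
    linarith
  have hlogn_pos : 0 < Real.log n := lt_of_lt_of_le (Real.exp_pos c) hlog
  have hloglog : c ≤ Real.log (Real.log n) := (Real.le_log_iff_exp_le hlogn_pos).mpr hlog
  have hexp : Real.exp Real.eulerMascheroniConstant * c = T := by
    rw [hc, hT, ← mul_div_assoc, ← mul_assoc, ← Real.exp_add]
    simp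
  calc (ArithmeticFunction.sigma 1 n : ℝ) / n < T := hstep1
    _ = Real.exp Real.eulerMascheroniConstant * c := hexp.symm
    _ ≤ Real.exp Real.eulerMascheroniConstant * Real.log (Real.log n) :=
        mul_le_mul_of_nonneg_left hloglog (Real.exp_pos _).le
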